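/- Let α ∈ (1/2,1). There exists a constant C > 0 (depending only on α) such that for all real numbers s, t with 0 ≤ s < t, ∫_0^s (K(t−u) − K(s−u))² du ≤ C (t−s)^(2α−1). -/

import Mathlib

open MeasureTheory intervalIntegral Real

/-- Fractional kernel `K(u) = u^(α-1)/Γ(α)` for `u > 0`, `0` otherwise. -/
noncomputable def Kker (α u : ℝ) : ℝ := if 0 < u then u ^ (α - 1) / Real.Gamma α else 0

/-- First-order resolvent kernel `L(u) = u^(-α)/Γ(1-α)` for `u > 0`, `0` otherwise. -/
noncomputable def Lker (α u : ℝ) : ℝ := if 0 < u then u ^ (-α) / Real.Gamma (1 - α) else 0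

/-- Discretization map `φ_h(t) = h⌊t/h⌋`. -/
noncomputable def phi (h t : ℝ) : ℝ := h * (⌊t / h⌋ : ℝ)

/-- `χ_h(u) = u - φ_h(u)`. -/
noncomputable def chi (h u : ℝ) : ℝ := u - phi h u

/-- Discretized kernel `K^{(h)}`. -/
noncomputable def Kh (α h t s : ℝ) : ℝ :=
  if 0 ≤ s ∧ s < phi h t then Kker α (phi h t - s) else 0

/-- The kernel `g^{(h)}(t,s) = ∫_s^t L(t-v) K^{(h)}(v,s) dv`. -/
noncomputable def gh (α h t s : ℝ) : ℝ := ∫ v in s..t, Lker α (t - v) * Kh α h v s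

lemma sq_rpow_aux (x p : ℝ) (hx : 0 ≤ x) : (x ^ p) ^ 2 = x ^ (p * 2) := by
  rw [Real.rpow_mul hx, Real.rpow_two]

/-- `∫_0^s (K(t−u) − K(s−u))² du ≤ C (t−s)^(2α−1)`. -/
theorem kernel_increment_L2_bound (α : ℝ) (hα : α ∈ Set.Ioo (1/2 : ℝ) 1) :
    ∃ C > 0, ∀ s t : ℝ, 0 ≤ s → s < t →
      (∫ u in (0:ℝ)..s, (Kker α (t - u) - Kker α (s - u)) ^ 2)
        ≤ C * (t - s) ^ (2 * α - 1) := by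
  obtain ⟨hα1, hα2⟩ := hα
  have hΓ : 0 < Real.Gamma α := Real.Gamma_pos_of_pos (by linarith)
  have hβ : (0:ℝ) < 2 * α - 1 := by linarith
  have hp : α - 1 < 0 := by linarith
  have hq : (-1:ℝ) < 2 * α - 2 := by linarith
  refine ⟨1 / ((2 * α - 1) * Real.Gamma α ^ 2), by positivity, ?_⟩
  intro s t hs hst
  have hK : ∀ x : ℝ, 0 ≤ x → Kker α x = x ^ (α - 1) / Real.Gamma α := by
    intro x hx
    rcases hx.lt_or_eq with h | h
    · simp [Kker, h]
    · simp [Kker, ← h, Real.zero_rpow hp.ne]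
  -- rewrite integrand via rpow
  have hcongr : (∫ u in (0:ℝ)..s, (Kker α (t - u) - Kker α (s - u)) ^ 2)
      = ∫ u in (0:ℝ)..s,
        ((t - u) ^ (α - 1) / Real.Gamma α - (s - u) ^ (α - 1) / Real.Gamma α) ^ 2 := by
    apply intervalIntegral.integral_congr
    intro u hu
    rw [Set.uIcc_of_le hs] at hu
    show (Kker α (t - u) - Kker α (s - u)) ^ 2 = _
    rw [hK (t - u) (by cases hu with | intro h1 h2 => linarith),
        hK (s - u) (by cases hu with | intro h1 h2 => linarith)]
  rw [hcongr]
  -- integrability facts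
  have hints : IntervalIntegrable (fun u => (s - u) ^ (2 * α - 2)) volume 0 s := by
    have := ((intervalIntegral.intervalIntegrable_rpow' hq (a := 0) (b := s)).comp_sub_left s).symm
    simpa using this
  have hcont : ContinuousOn (fun u : ℝ => (t - u) ^ (2 * α - 2)) (Set.Icc 0 s) := by
    apply ContinuousOn.rpow_const
    · exact (continuous_const.sub continuous_id).continuousOn
    · intro x hx
      exact Or.inl (by cases hx with | intro h1 h2 => nlinarith)
  have hintt : IntervalIntegrable (fun u => (t - u) ^ (2 * α - 2)) volume 0 s := by
    apply ContinuousOn.intervalIntegrable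
    rw [Set.uIcc_of_le hs]
    exact hcont
  -- pointwise bound on Ioo
  set g : ℝ → ℝ := fun u =>
    ((s - u) ^ (2 * α - 2) - (t - u) ^ (2 * α - 2)) / Real.Gamma α ^ 2 with hg
  have hptwise : ∀ u ∈ Set.Ioo (0:ℝ) s,
      ((t - u) ^ (α - 1) / Real.Gamma α - (s - u) ^ (α - 1) / Real.Gamma α) ^ 2 ≤ g u := by
    intro u hu
    obtain ⟨hu1, hu2⟩ := hu
    have hx : (0:ℝ) < s - u := by linarith
    have hxy : s - u ≤ t - u := by linarith
    have hab : (t - u) ^ (α - 1) ≤ (s - u) ^ (α - 1) :=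
      Real.rpow_le_rpow_of_nonpos hx hxy hp.le
    have ha : (0:ℝ) ≤ (t - u) ^ (α - 1) := Real.rpow_nonneg (by linarith) _
    have hsq1 : ((s - u) ^ (α - 1)) ^ 2 = (s - u) ^ (2 * α - 2) := by
      rw [sq_rpow_aux _ _ hx.le]; ring_nf
    have hsq2 : ((t - u) ^ (α - 1)) ^ 2 = (t - u) ^ (2 * α - 2) := by
      rw [sq_rpow_aux _ _ (by linarith : (0:ℝ) ≤ t - u)]; ring_nf
    show _ ≤ ((s - u) ^ (2 * α - 2) - (t - u) ^ (2 * α - 2)) / Real.Gamma α ^ 2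
    rw [div_sub_div_same, div_pow]
    rw [← hsq1, ← hsq2]
    apply div_le_div_of_nonneg_right ?_ (by positivity)
    nlinarith
  -- integrability of squared difference on Ioo
  have hmeas : ContinuousOn (fun u : ℝ =>
      ((t - u) ^ (α - 1) / Real.Gamma α - (s - u) ^ (α - 1) / Real.Gamma α) ^ 2)
      (Set.Ioo 0 s) := by
    apply ContinuousOn.pow
    apply ContinuousOn.sub
    · apply ContinuousOn.div_const
      apply ContinuousOn.rpow_const (continuous_const.sub continuous_id).continuousOn
      intro x hx
      obtain ⟨h1, h2⟩ := hx
      refine Or.inl ?_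
      simp only [Pi.sub_apply, id_eq]
      intro h
      nlinarith
    · apply ContinuousOn.div_const
      apply ContinuousOn.rpow_const (continuous_const.sub continuous_id).continuousOn
      intro x hx
      obtain ⟨h1, h2⟩ := hx
      refine Or.inl ?_
      simp only [Pi.sub_apply, id_eq]
      intro h
      nlinarith
  have hgint : IntegrableOn g (Set.Ioo 0 s) := by
    have h1 : IntegrableOn (fun u => (s - u) ^ (2 * α - 2)) (Set.Ioo 0 s) :=
      ((intervalIntegrable_iff_integrableOn_Ioo_of_le hs).mp hints)
    have h2 : IntegrableOn (fun u => (t - u) ^ (2 * α - 2)) (Set.Ioo 0 s) :=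
      ((intervalIntegrable_iff_integrableOn_Ioo_of_le hs).mp hintt)
    exact ((h1.sub h2).div_const _)
  have hfint : IntegrableOn (fun u : ℝ =>
      ((t - u) ^ (α - 1) / Real.Gamma α - (s - u) ^ (α - 1) / Real.Gamma α) ^ 2)
      (Set.Ioo 0 s) := by
    apply Integrable.mono' hgint (hmeas.aestronglyMeasurable measurableSet_Ioo)
    filter_upwards [ae_restrict_mem measurableSet_Ioo] with u hu
    rw [Real.norm_eq_abs, abs_of_nonneg (sq_nonneg _)]
    exact hptwise u hu
  -- compare integrals
  have hle : (∫ u in (0:ℝ)..s,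
      ((t - u) ^ (α - 1) / Real.Gamma α - (s - u) ^ (α - 1) / Real.Gamma α) ^ 2)
      ≤ ∫ u in (0:ℝ)..s, g u := by
    rw [intervalIntegral.integral_of_le hs, intervalIntegral.integral_of_le hs,
        MeasureTheory.integral_Ioc_eq_integral_Ioo, MeasureTheory.integral_Ioc_eq_integral_Ioo]
    exact setIntegral_mono_on hfint hgint measurableSet_Ioo hptwise
  refine hle.trans ?_
  -- evaluate ∫ g
  have hev1 : (∫ u in (0:ℝ)..s, (s - u) ^ (2 * α - 2)) = s ^ (2 * α - 1) / (2 * α - 1) := by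
    rw [intervalIntegral.integral_comp_sub_left (fun v => v ^ (2 * α - 2)) s]
    simp only [sub_self, sub_zero]
    rw [integral_rpow (Or.inl hq)]
    rw [Real.zero_rpow (by linarith : 2 * α - 2 + 1 ≠ 0)]
    ring_nf
  have hev2 : (∫ u in (0:ℝ)..s, (t - u) ^ (2 * α - 2))
      = (t ^ (2 * α - 1) - (t - s) ^ (2 * α - 1)) / (2 * α - 1) := by
    rw [intervalIntegral.integral_comp_sub_left (fun v => v ^ (2 * α - 2)) t]
    simp only [sub_zero]
    rw [integral_rpow (Or.inl hq)]
    ring_nf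
  have hgev : (∫ u in (0:ℝ)..s, g u)
      = (s ^ (2 * α - 1) - (t ^ (2 * α - 1) - (t - s) ^ (2 * α - 1)))
        / (2 * α - 1) / Real.Gamma α ^ 2 := by
    simp only [hg]
    rw [intervalIntegral.integral_div, intervalIntegral.integral_sub hints hintt, hev1, hev2]
    ring
  rw [hgev]
  have hst' : s ^ (2 * α - 1) ≤ t ^ (2 * α - 1) :=
    Real.rpow_le_rpow hs hst.le hβ.le
  rw [div_div, div_le_iff₀ (by positivity)]
  have hΔ : (0:ℝ) < (t - s) ^ (2 * α - 1) := Real.rpow_pos_of_pos (by linarith) _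
  have : s ^ (2 * α - 1) - (t ^ (2 * α - 1) - (t - s) ^ (2 * α - 1)) ≤ (t - s) ^ (2 * α - 1) := by
    linarith
  calc s ^ (2 * α - 1) - (t ^ (2 * α - 1) - (t - s) ^ (2 * α - 1))
      ≤ (t - s) ^ (2 * α - 1) := this
    _ = 1 / ((2 * α - 1) * Real.Gamma α ^ 2) * (t - s) ^ (2 * α - 1)
        * ((2 * α - 1) * Real.Gamma α ^ 2) := by field_simp
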